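/- Let Γ = Cay(Z_{2m}, S) be a circulant graph satisfying: there exist nontrivial subgroups H, K of Z_{2m} with |K| even, K_o = K \ 2K, m ∈ H \ K_o, and either (1) S + H ⊆ S ∪ (K_o + H) with H ∩ K_o = ∅, or (2) (S \ K_o) + H ⊆ S ∪ K_o with |H| ≠ 2 or 4 | |K|. Then Γ is isomorphic to Cay(Z_{2m}, S + m). -/
import Mathlib



open SimpleGraph Pointwise

/-- `2K = {2k : k ∈ K}` for a subgroup `K`. -/
def twoMul {n : ℕ} (K : AddSubgroup (ZMod n)) : Set (ZMod n) :=
  (fun k => 2 * k) '' (K : Set (ZMod n))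

/-- `K_o = K \ 2K`. -/
def oddPart {n : ℕ} (K : AddSubgroup (ZMod n)) : Set (ZMod n) :=
  (K : Set (ZMod n)) \ twoMul K

/-- In `ZMod (2m)` with `m > 0`, the only element of order two is `m`. -/
lemma ord_two_unique (m : ℕ) (hm : 0 < m) (y : ZMod (2 * m)) (hy : y ≠ 0)
    (h : y + y = 0) : y = (m : ZMod (2 * m)) := by
  haveI : NeZero (2 * m) := ⟨by omega⟩
  have hv : y.val < 2 * m := ZMod.val_lt y
  have hcast : ((y.val : ℕ) : ZMod (2 * m)) = y := ZMod.natCast_zmod_val y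
  have h2 : ((y.val + y.val : ℕ) : ZMod (2 * m)) = 0 := by push_cast [hcast]; exact h
  have hdvd : (2 * m) ∣ (y.val + y.val) := (ZMod.natCast_eq_zero_iff _ _).mp h2
  have hv0 : y.val ≠ 0 := fun h0 => hy (by rw [← hcast, h0, Nat.cast_zero])
  have heq : y.val + y.val = 2 * m :=
    Nat.eq_of_dvd_of_lt_two_mul (by omega) hdvd (by omega)
  have : y.val = m := by omega
  rw [← hcast, this]

theorem stmt16 (m : ℕ) (hm : 0 < m) (S : Set (ZMod (2 * m)))
    (hS : ∀ s ∈ S, -s ∈ S) (h0 : (0 : ZMod (2 * m)) ∉ S)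
    (H K : AddSubgroup (ZMod (2 * m))) (hHnt : H ≠ ⊥) (hKnt : K ≠ ⊥)
    (hKeven : Even (Nat.card K))
    (hmH : (m : ZMod (2 * m)) ∈ H)
    (hmKo : (m : ZMod (2 * m)) ∉ oddPart K)
    (hcond :
      (S + (H : Set (ZMod (2 * m))) ⊆ S ∪ (oddPart K + (H : Set (ZMod (2 * m)))) ∧
        (H : Set (ZMod (2 * m))) ∩ oddPart K = ∅) ∨
      ((S \ oddPart K) + (H : Set (ZMod (2 * m))) ⊆ S ∪ oddPart K ∧
        (Nat.card H ≠ 2 ∨ 4 ∣ Nat.card K))) :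
    Nonempty
      ((circulantGraph S) ≃g
        (circulantGraph ((· + (m : ZMod (2 * m))) '' S))) := by
  classical
  haveI : NeZero (2 * m) := ⟨by omega⟩
  have hmm0 : (m : ZMod (2 * m)) + m = 0 := by
    have : ((2 * m : ℕ) : ZMod (2 * m)) = 0 := ZMod.natCast_self _
    push_cast at this
    linear_combination this
  have hmne : (m : ZMod (2 * m)) ≠ 0 := by
    intro h
    have := Nat.le_of_dvd hm ((ZMod.natCast_eq_zero_iff m (2 * m)).mp h)
    omega
  -- Step 1: find a subgroup L and γ ∉ L with γ + γ ∈ L, m ∈ L, and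
  -- all "differences" between S and S + m lying in γ + L.
  obtain ⟨L, γ, hγL, h2γ, hmL, hD⟩ :
      ∃ (L : AddSubgroup (ZMod (2 * m))) (γ : ZMod (2 * m)),
        γ ∉ L ∧ γ + γ ∈ L ∧ (m : ZMod (2 * m)) ∈ L ∧
          ∀ d : ZMod (2 * m), (d ∈ S ↔ d + m ∈ S) ∨ d - γ ∈ L := by
    -- a generator of K
    obtain ⟨g, hg⟩ := IsAddCyclic.exists_generator (α := ↥K)
    set γ : ZMod (2 * m) := (g : ZMod (2 * m)) with hγdef
    have hγK : γ ∈ K := g.2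
    have hLa : ∀ x ∈ K, ∃ a : ℤ, a • γ = x := by
      intro x hx
      obtain ⟨a, ha⟩ := AddSubgroup.mem_zmultiples_iff.mp (hg ⟨x, hx⟩)
      exact ⟨a, by simpa [hγdef] using congrArg (Subtype.val) ha⟩
    have hmem2 : ∀ x : ZMod (2 * m), x ∈ twoMul K ↔ ∃ k ∈ K, 2 * k = x := by
      intro x; simp [twoMul, Set.mem_image]
    have htord : addOrderOf γ = Nat.card ↥K := by
      have h1 : addOrderOf γ = addOrderOf g :=
        addOrderOf_injective K.subtype Subtype.coe_injective g
      rw [h1]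
      exact addOrderOf_eq_card_of_forall_mem_zmultiples hg
    have hteven : Even (addOrderOf γ) := htord ▸ hKeven
    have htpos : 0 < addOrderOf γ := addOrderOf_pos γ
    -- membership criterion for 2K
    have hLb : ∀ a : ℤ, a • γ ∈ twoMul K ↔ Even a := by
      intro a
      constructor
      · intro hmem
        obtain ⟨x, hxK, hx⟩ := (hmem2 _).mp hmem
        obtain ⟨c, hc⟩ := hLa x hxK
        have h2x : (2 * c) • γ = a • γ := by
          calc (2 * c) • γ = (2 : ℤ) • (c • γ) := mul_smul 2 c γ
            _ = (2 : ℤ) • x := by rw [hc]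
            _ = x + x := two_zsmul x
            _ = 2 * x := (two_mul x).symm
            _ = a • γ := hx
        have : ((addOrderOf γ : ℤ)) ∣ (a - 2 * c) := by
          have hz : (a - 2 * c) • γ = 0 := by
            rw [sub_smul, h2x, sub_self]
          exact (addOrderOf_dvd_iff_zsmul_eq_zero).mpr hz
        obtain ⟨k, hk⟩ := this
        obtain ⟨t, ht⟩ := hteven
        have : a = (t : ℤ) * k + t * k + 2 * c := by
          have : (addOrderOf γ : ℤ) = t + t := by exact_mod_cast congrArg (Nat.cast) ht
          rw [this] at hk; linarith
        exact ⟨t * k + c, by linarith⟩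
      · rintro ⟨c, rfl⟩
        refine (hmem2 _).mpr ⟨c • γ, K.zsmul_mem hγK c, ?_⟩
        rw [add_smul]
        exact two_mul _
    have hγ2K : γ ∉ twoMul K := by
      intro h
      have : Even (1 : ℤ) := (hLb 1).mp (by simpa using h)
      exact (by decide : ¬ Even (1 : ℤ)) this
    have hγKo : γ ∈ oddPart K := ⟨hγK, hγ2K⟩
    have hcoset : ∀ x ∈ oddPart K, x - γ ∈ twoMul K := by
      rintro x ⟨hxK, hx2⟩
      obtain ⟨a, rfl⟩ := hLa x hxK
      have ha : ¬ Even a := fun h => hx2 ((hLb a).mpr h)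
      have : (a - 1) • γ ∈ twoMul K := (hLb (a - 1)).mpr (by
        rcases Int.even_or_odd a with h | h
        · exact absurd h ha
        · exact (Int.even_sub_one).mpr (Int.not_even_iff_odd.mpr h))
      simpa [sub_smul] using this
    -- m ∈ K
    have hmK : (m : ZMod (2 * m)) ∈ K := by
      set t' := addOrderOf γ / 2 with ht'
      have htt : t' + t' = addOrderOf γ := by
        obtain ⟨t, ht⟩ := hteven; omega
      have hy0 : t' • γ + t' • γ = 0 := by
        rw [← add_nsmul, htt]; exact addOrderOf_nsmul_eq_zero γ
      have hyne : t' • γ ≠ 0 := by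
        intro h
        have := addOrderOf_dvd_of_nsmul_eq_zero h
        have h1 : 0 < t' := by omega
        have h2 : t' < addOrderOf γ := by omega
        exact absurd (Nat.le_of_dvd h1 this) (by omega)
      have := ord_two_unique m hm (t' • γ) hyne hy0
      rw [← this]
      exact K.nsmul_mem hγK t'
    -- the subgroup 2K
    set L2 : AddSubgroup (ZMod (2 * m)) := K.map (AddMonoidHom.mulLeft 2) with hL2def
    have hL2 : (L2 : Set (ZMod (2 * m))) = twoMul K := by
      ext x
      simp [hL2def, AddSubgroup.mem_map, twoMul, AddMonoidHom.mulLeft]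
    have h2γL2 : γ + γ ∈ L2 := by
      have : γ + γ ∈ twoMul K := (hmem2 _).mpr ⟨γ, hγK, two_mul γ⟩
      rw [← hL2] at this; exact this
    rcases hcond with ⟨h1, h2⟩ | ⟨h1, h2⟩
    · -- Case 1 : L = 2K ⊔ H
      refine ⟨L2 ⊔ H, γ, ?_, AddSubgroup.mem_sup_left h2γL2,
        AddSubgroup.mem_sup_right hmH, ?_⟩
      · intro h
        rw [AddSubgroup.mem_sup] at h
        obtain ⟨a, haL2, b, hbH, hab⟩ := h
        have ha2K : a ∈ twoMul K := by rw [← hL2]; exact haL2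
        have haK : a ∈ K := by
          obtain ⟨k, hk, hke⟩ := (hmem2 _).mp ha2K
          have h' : a = k + k := by rw [← hke]; exact two_mul k
          rw [h']; exact K.add_mem hk hk
        have hbKo : b ∈ oddPart K := by
          constructor
          · have : b = γ - a := by linear_combination hab
            rw [this]; exact K.sub_mem hγK haK
          · intro hb2
            apply hγ2K
            obtain ⟨k1, hk1, hk1e⟩ := (hmem2 _).mp ha2K
            obtain ⟨k2, hk2, hk2e⟩ := (hmem2 _).mp hb2
            exact (hmem2 _).mpr ⟨k1 + k2, K.add_mem hk1 hk2, by
              rw [mul_add, hk1e, hk2e, hab]⟩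
        have : b ∈ (H : Set (ZMod (2 * m))) ∩ oddPart K := ⟨hbH, hbKo⟩
        rw [h2] at this
        exact this
      · -- difference condition
        have C1 : ∀ d : ZMod (2 * m), d + m ∈ S → d ∉ S → d - γ ∈ L2 ⊔ H := by
          intro d hdm hd
          have hdSH : d ∈ S + (H : Set (ZMod (2 * m))) := by
            have := Set.add_mem_add hdm hmH
            rwa [add_assoc, hmm0, add_zero] at this
          rcases h1 hdSH with h | h
          · exact absurd h hd
          · obtain ⟨u, huKo, v, hvH, huv⟩ := h
            have hu2 : u - γ ∈ twoMul K := hcoset u huKo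
            rw [← hL2] at hu2
            have : d - γ = (u - γ) + v := by linear_combination -huv
            rw [this]
            exact (L2 ⊔ H).add_mem (AddSubgroup.mem_sup_left hu2)
              (AddSubgroup.mem_sup_right hvH)
        intro d
        by_cases hiff : d ∈ S ↔ d + m ∈ S
        · exact Or.inl hiff
        · right
          by_cases hd : d ∈ S
          · have hdm : d + m ∉ S := fun h => hiff ⟨fun _ => h, fun _ => hd⟩
            have := C1 (d + m) (by rwa [add_assoc, hmm0, add_zero]) hdm
            have hmem : d - γ = ((d + m) - γ) - m := by ring
            rw [hmem]
            exact (L2 ⊔ H).sub_mem this (AddSubgroup.mem_sup_right hmH)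
          · have hdm : d + m ∈ S := by
              by_contra hdm
              exact hiff ⟨fun h => absurd h hd, fun h => absurd h hdm⟩
            exact C1 d hdm hd
    · -- Case 2 : L = 2K
      have hm2K : (m : ZMod (2 * m)) ∈ L2 := by
        have : (m : ZMod (2 * m)) ∈ twoMul K := by
          by_contra h
          exact hmKo ⟨hmK, h⟩
        rwa [← hL2] at this
      refine ⟨L2, γ, ?_, h2γL2, hm2K, ?_⟩
      · intro h
        apply hγ2K
        rwa [← hL2]
      · have C2 : ∀ d : ZMod (2 * m), d ∈ S → d + m ∉ S → d - γ ∈ L2 := by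
          intro d hd hdm
          by_cases hKo : d ∈ oddPart K
          · have := hcoset d hKo
            rw [← hL2] at this; exact this
          · have : d + m ∈ (S \ oddPart K) + (H : Set (ZMod (2 * m))) :=
              Set.add_mem_add ⟨hd, hKo⟩ hmH
            rcases h1 this with h | h
            · exact absurd h hdm
            · have := hcoset (d + m) h
              rw [← hL2] at this
              have hmem : d - γ = ((d + m) - γ) - m := by ring
              rw [hmem]
              exact L2.sub_mem this hm2K
        intro d
        by_cases hiff : d ∈ S ↔ d + m ∈ S
        · exact Or.inl hiff
        · right
          by_cases hd : d ∈ S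
          · exact C2 d hd (fun h => hiff ⟨fun _ => h, fun _ => hd⟩)
          · have hdm : d + m ∈ S := by
              by_contra hdm
              exact hiff ⟨fun h => absurd h hd, fun h => absurd h hdm⟩
            have := C2 (d + m) hdm (by rwa [add_assoc, hmm0, add_zero])
            have hmem : d - γ = ((d + m) - γ) - m := by ring
            rw [hmem]
            exact L2.sub_mem this hm2K
  -- Step 2: build the isomorphism by flipping by m on a set T.
  set M : AddSubgroup (ZMod (2 * m)) := L ⊔ AddSubgroup.zmultiples γ with hMdef
  have hγM : γ ∈ M := AddSubgroup.mem_sup_right (AddSubgroup.mem_zmultiples γ)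
  have hLM : L ≤ M := le_sup_left
  set rep : ZMod (2 * m) → ZMod (2 * m) :=
    fun x => (QuotientAddGroup.mk (s := M) x).out with hrepdef
  have hrep_mem : ∀ x, x - rep x ∈ M := by
    intro x
    have h : (QuotientAddGroup.mk (s := M) (rep x) : ZMod (2 * m) ⧸ M)
        = QuotientAddGroup.mk (s := M) x := QuotientAddGroup.out_eq' _
    have := (QuotientAddGroup.eq (s := M)).mp h
    simpa [neg_add_eq_sub] using this
  have hrep_congr : ∀ x u, u ∈ M → rep (x + u) = rep x := by
    intro x u hu
    have : (QuotientAddGroup.mk (s := M) (x + u) : ZMod (2 * m) ⧸ M)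
        = QuotientAddGroup.mk (s := M) x := by
      rw [QuotientAddGroup.eq]
      have : -(x + u) + x = -u := by ring
      rw [this]; exact M.neg_mem hu
    simp only [hrepdef, this]
  -- decomposition of M
  have hMdec : ∀ u ∈ M, u ∈ L ∨ u - γ ∈ L := by
    intro u hu
    rw [hMdef, AddSubgroup.mem_sup] at hu
    obtain ⟨l, hl, z, hz, rfl⟩ := hu
    obtain ⟨c, rfl⟩ := AddSubgroup.mem_zmultiples_iff.mp hz
    rcases Int.even_or_odd c with ⟨e, rfl⟩ | ⟨e, rfl⟩
    · left
      have : (e + e) • γ = e • (γ + γ) := by rw [add_smul, smul_add]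
      rw [this]
      exact L.add_mem hl (L.zsmul_mem h2γ e)
    · right
      have h1 : (2 * e + 1) • γ = e • (γ + γ) + γ := by
        have h2 : (2 * e + 1) • γ = (e + e) • γ + (1 : ℤ) • γ := by
          rw [← add_smul]; congr 1; ring
        rw [h2, one_smul, add_smul, smul_add]
      have : l + (2 * e + 1) • γ - γ = l + e • (γ + γ) := by
        rw [h1]; abel
      rw [this]
      exact L.add_mem hl (L.zsmul_mem h2γ e)
  set T : Set (ZMod (2 * m)) := {x | x - rep x ∈ L} with hTdef
  have hK1 : ∀ x l, l ∈ L → (x + l ∈ T ↔ x ∈ T) := by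
    intro x l hl
    have h1 : rep (x + l) = rep x := hrep_congr x l (hLM hl)
    simp only [hTdef, Set.mem_setOf_eq, h1]
    constructor
    · intro h
      have : x - rep x = (x + l - rep x) - l := by ring
      rw [this]; exact L.sub_mem h hl
    · intro h
      have : x + l - rep x = (x - rep x) + l := by ring
      rw [this]; exact L.add_mem h hl
  have hK2 : ∀ x, x + γ ∈ T ↔ x ∉ T := by
    intro x
    have h1 : rep (x + γ) = rep x := hrep_congr x γ hγM
    simp only [hTdef, Set.mem_setOf_eq, h1]
    have hshift : x + γ - rep x = (x - rep x) + γ := by ring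
    rw [hshift]
    set u := x - rep x with hudef
    have hu : u ∈ M := hrep_mem x
    constructor
    · intro h hc
      apply hγL
      have : γ = (u + γ) - u := by ring
      rw [this]; exact L.sub_mem h hc
    · intro h
      rcases hMdec u hu with h' | h'
      · exact absurd h' h
      · have : u + γ = (u - γ) + (γ + γ) := by ring
        rw [this]; exact L.add_mem h' h2γ
  have hflip2 : ∀ x y : ZMod (2 * m), x - y - γ ∈ L → (x ∈ T ↔ y ∉ T) := by
    intro x y h
    have h1 := hK1 y (x - y - γ) h
    have h2 := hK2 (y + (x - y - γ))
    rw [show y + (x - y - γ) + γ = x by ring] at h2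
    rw [h2, h1]
  -- the map
  set φ : ZMod (2 * m) → ZMod (2 * m) := fun x => if x ∈ T then x + m else x with hφdef
  have hmT : ∀ x : ZMod (2 * m), x + m ∈ T ↔ x ∈ T := fun x => hK1 x m hmL
  have hinv : ∀ x, φ (φ x) = x := by
    intro x
    by_cases h : x ∈ T
    · simp only [hφdef, if_pos h, if_pos ((hmT x).mpr h), add_assoc, hmm0, add_zero]
    · simp only [hφdef, if_neg h]
  set e : ZMod (2 * m) ≃ ZMod (2 * m) := ⟨φ, φ, hinv, hinv⟩ with hedef
  set S' : Set (ZMod (2 * m)) := (· + (m : ZMod (2 * m))) '' S with hS'def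
  have hS'mem : ∀ z, z ∈ S' ↔ z + m ∈ S := by
    intro z
    constructor
    · rintro ⟨s, hs, rfl⟩
      rwa [add_assoc, hmm0, add_zero]
    · intro h
      exact ⟨z + m, h, by show z + m + m = z; rw [add_assoc, hmm0, add_zero]⟩
  have hmain : ∀ x y : ZMod (2 * m), φ x - φ y ∈ S' ↔ x - y ∈ S := by
    intro x y
    by_cases hx : x ∈ T <;> by_cases hy : y ∈ T
    · simp only [hφdef, if_pos hx, if_pos hy]
      rw [show x + m - (y + m) = x - y by ring, hS'mem]
      rcases hD (x - y) with h | h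
      · exact h.symm
      · exact absurd ((hflip2 x y h).mp hx) (fun hc => hc hy)
    · simp only [hφdef, if_pos hx, if_neg hy]
      rw [hS'mem, show x + m - y + m = x - y + (m + m) by ring, hmm0, add_zero]
    · simp only [hφdef, if_neg hx, if_pos hy]
      rw [hS'mem, show x - (y + m) + m = x - y by ring]
    · simp only [hφdef, if_neg hx, if_neg hy]
      rw [hS'mem]
      rcases hD (x - y) with h | h
      · exact h.symm
      · exact absurd ((hflip2 x y h).mpr hy) hx
  have hinj : Function.Injective φ := Function.LeftInverse.injective hinv
  refine ⟨⟨e, ?_⟩⟩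
  intro a b
  show (circulantGraph S').Adj (φ a) (φ b) ↔ (circulantGraph S).Adj a b
  simp only [circulantGraph_adj]
  constructor
  · rintro ⟨hne, h | h⟩
    · exact ⟨fun hab => hne (by rw [hab]), Or.inl ((hmain a b).mp h)⟩
    · exact ⟨fun hab => hne (by rw [hab]), Or.inr ((hmain b a).mp h)⟩
  · rintro ⟨hne, h | h⟩
    · exact ⟨fun hab => hne (hinj hab), Or.inl ((hmain a b).mpr h)⟩
    · exact ⟨fun hab => hne (hinj hab), Or.inr ((hmain b a).mpr h)⟩
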